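/- Given measures R and probability couplings on Polish spaces, if P* minimizes H(P | R) subject to the endpoint marginal constraints P₀ = ρ₀ and P₁ = ρ₁, then its endpoint joint law P*₀₁ minimizes H(π | R₀₁) over couplings π with marginals π₀ = ρ₀ and π₁ = ρ₁. Conversely, if π* minimizes the static problem, then the mixture P* = ∫ R^{xy} dπ*(x,y) minimizes the dynamic problem, and P*₀₁ = π*. -/

import Mathlib

open MeasureTheory Classical

/-- Relative entropy `H(P | Q)`. -/
noncomputable def relEnt {Ω : Type*} [MeasurableSpace Ω] (P Q : Measure Ω) : EReal :=
  if P ≪ Q ∧ Integrable (llr P Q) P then ((∫ ω, llr P Q ω ∂P : ℝ) : EReal) else ⊤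

section Aux

variable {Ω 𝒴 : Type*} [MeasurableSpace Ω] [MeasurableSpace 𝒴]

/-- Gibbs' inequality: relative entropy is nonnegative. -/
lemma gibbs_llr_nonneg (μ ν : Measure Ω) [IsProbabilityMeasure μ] [IsProbabilityMeasure ν]
    (hμν : μ ≪ ν) (h_int : Integrable (llr μ ν) μ) : 0 ≤ ∫ x, llr μ ν x ∂μ := by
  have hgi : Integrable (Real.exp ∘ fun x => - llr μ ν x) μ :=
    (Measure.integrable_toReal_rnDeriv (μ := ν) (ν := μ)).congr (exp_neg_llr hμν).symm
  have hJ := convexOn_exp.map_integral_le (μ := μ) (f := fun x => - llr μ ν x)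
      Real.continuous_exp.continuousOn isClosed_univ
      (Filter.Eventually.of_forall fun _ => Set.mem_univ _) h_int.neg hgi
  have h1 : ∫ x, Real.exp (- llr μ ν x) ∂μ ≤ 1 := by
    rw [integral_congr_ae (exp_neg_llr hμν)]
    calc ∫ x, (ν.rnDeriv μ x).toReal ∂μ
        = ∫ x in Set.univ, (ν.rnDeriv μ x).toReal ∂μ := by rw [setIntegral_univ]
      _ ≤ (ν Set.univ).toReal := Measure.setIntegral_toReal_rnDeriv_le (measure_ne_top ν _)
      _ = 1 := by simp
  have h2 : Real.exp (∫ x, - llr μ ν x ∂μ) ≤ 1 := le_trans hJ h1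
  rw [Real.exp_le_one_iff, integral_neg] at h2
  linarith

/-- The negative part of the log-likelihood ratio is always integrable. -/
lemma integrable_negPart_llr (μ ν : Measure Ω) [IsProbabilityMeasure μ] [IsProbabilityMeasure ν]
    (hμν : μ ≪ ν) : Integrable (fun x => max (- llr μ ν x) 0) μ := by
  have hint : Integrable (fun x => (ν.rnDeriv μ x).toReal) μ :=
    Measure.integrable_toReal_rnDeriv
  refine hint.mono' ((measurable_llr μ ν).neg.max measurable_const).aestronglyMeasurable ?_
  filter_upwards [exp_neg_llr hμν] with x hx
  rw [Real.norm_eq_abs, abs_of_nonneg (le_max_right _ _), ← hx]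
  exact max_le (by linarith [Real.add_one_le_exp (- llr μ ν x)]) (Real.exp_pos _).le

variable {T : Ω → 𝒴} {K : 𝒴 → Measure Ω} {R : Measure Ω}

/-- Binding with a probability kernel gives a probability measure. -/
lemma isProbabilityMeasure_bind (hK : Measurable K) (hKp : ∀ y, IsProbabilityMeasure (K y))
    (π : Measure 𝒴) [IsProbabilityMeasure π] : IsProbabilityMeasure (π.bind K) := by
  constructor
  rw [Measure.bind_apply MeasurableSet.univ hK.aemeasurable]
  simp [measure_univ]


lemma integrable_comp_of_map (hT : Measurable T) {μ : Measure Ω} {ν : Measure 𝒴}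
    (hmap : μ.map T = ν) {φ : 𝒴 → ℝ} (hφ : StronglyMeasurable φ) (h : Integrable φ ν) :
    Integrable (fun ω => φ (T ω)) μ := by
  rw [← hmap] at h
  exact (integrable_map_measure hφ.aestronglyMeasurable hT.aemeasurable).mp h

lemma integrable_of_comp_map (hT : Measurable T) {μ : Measure Ω} {ν : Measure 𝒴}
    (hmap : μ.map T = ν) {φ : 𝒴 → ℝ} (hφ : StronglyMeasurable φ)
    (h : Integrable (fun ω => φ (T ω)) μ) : Integrable φ ν := by
  rw [← hmap]
  exact (integrable_map_measure hφ.aestronglyMeasurable hT.aemeasurable).mpr h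

lemma integral_comp_of_map (hT : Measurable T) {μ : Measure Ω} {ν : Measure 𝒴}
    (hmap : μ.map T = ν) {φ : 𝒴 → ℝ} (hφ : StronglyMeasurable φ) :
    ∫ ω, φ (T ω) ∂μ = ∫ y, φ y ∂ν := by
  rw [← hmap]
  exact (integral_map hT.aemeasurable hφ.aestronglyMeasurable).symm

variable [MeasurableSingletonClass 𝒴]

lemma fiber_one (hT : Measurable T) (hKp : ∀ y, IsProbabilityMeasure (K y))
    (hfib : ∀ y, K y {ω | T ω ≠ y} = 0) (y : 𝒴) : K y (T ⁻¹' {y}) = 1 := by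
  have hms : MeasurableSet (T ⁻¹' {y}) := hT (measurableSet_singleton y)
  have hc : K y ((T ⁻¹' {y})ᶜ) = 0 := by
    have : (T ⁻¹' {y})ᶜ = {ω | T ω ≠ y} := by ext ω; simp
    rw [this]; exact hfib y
  exact (prob_compl_eq_zero_iff hms).mp hc

/-- The endpoint map sends `π.bind K` back to `π`. -/
lemma bind_map_eq (hT : Measurable T) (hK : Measurable K)
    (hKp : ∀ y, IsProbabilityMeasure (K y)) (hfib : ∀ y, K y {ω | T ω ≠ y} = 0)
    (π : Measure 𝒴) [IsProbabilityMeasure π] : (π.bind K).map T = π := by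
  ext s hs
  rw [Measure.map_apply hT hs, Measure.bind_apply (hT hs) hK.aemeasurable]
  have hval : ∀ y, K y (T ⁻¹' s) = s.indicator (fun _ => (1 : ENNReal)) y := by
    intro y
    by_cases hy : y ∈ s
    · rw [Set.indicator_of_mem hy]
      refine le_antisymm prob_le_one ?_
      calc (1 : ENNReal) = K y (T ⁻¹' {y}) := (fiber_one hT hKp hfib y).symm
        _ ≤ K y (T ⁻¹' s) :=
            measure_mono (Set.preimage_mono (Set.singleton_subset_iff.2 hy))
    · rw [Set.indicator_of_notMem hy]
      refine measure_mono_null ?_ (hfib y)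
      intro ω hω h
      exact hy (h ▸ hω)
  simp_rw [hval]
  rw [lintegral_indicator_const hs, one_mul]

/-- Binding a `withDensity` measure with the bridge kernel. -/
lemma bind_withDensity (hT : Measurable T) (hK : Measurable K)
    (hKp : ∀ y, IsProbabilityMeasure (K y)) (hfib : ∀ y, K y {ω | T ω ≠ y} = 0)
    (hRdis : R = (R.map T).bind K) {f : 𝒴 → ENNReal} (hf : Measurable f) :
    ((R.map T).withDensity f).bind K = R.withDensity (f ∘ T) := by
  ext A hA
  rw [Measure.bind_apply hA hK.aemeasurable, withDensity_apply _ hA]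
  have hKA : Measurable fun y => K y A := (Measure.measurable_coe hA).comp hK
  rw [lintegral_withDensity_eq_lintegral_mul _ hf hKA]
  conv_rhs => rw [← lintegral_indicator hA, hRdis,
    Measure.lintegral_bind hK.aemeasurable ((hf.comp hT).indicator hA).aemeasurable]
  refine lintegral_congr fun y => ?_
  have hae : ∀ᵐ ω ∂(K y), T ω = y := by
    rw [ae_iff]; exact hfib y
  calc (f y * K y A)
      = ∫⁻ ω, A.indicator (fun _ => f y) ω ∂(K y) := (lintegral_indicator_const hA _).symm
    _ = ∫⁻ ω, A.indicator (f ∘ T) ω ∂(K y) := by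
        refine lintegral_congr_ae ?_
        filter_upwards [hae] with ω hω
        by_cases hωA : ω ∈ A <;> simp [hωA, Function.comp, hω]

/-- Relative entropy of the lifted measure is at most the static entropy. -/
lemma relEnt_bind_le (hT : Measurable T) (hK : Measurable K)
    (hKp : ∀ y, IsProbabilityMeasure (K y)) (hfib : ∀ y, K y {ω | T ω ≠ y} = 0)
    (hRdis : R = (R.map T).bind K) [IsProbabilityMeasure R]
    (π : Measure 𝒴) [IsProbabilityMeasure π] :
    relEnt (π.bind K) R ≤ relEnt π (R.map T) := by
  by_cases hc : π ≪ R.map T ∧ Integrable (llr π (R.map T)) π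
  swap
  · conv_rhs => rw [relEnt, if_neg hc]
    exact le_top
  obtain ⟨hac, hint⟩ := hc
  haveI : IsProbabilityMeasure (R.map T) := Measure.isProbabilityMeasure_map hT.aemeasurable
  set f := π.rnDeriv (R.map T) with hfdef
  have hfm : Measurable f := Measure.measurable_rnDeriv _ _
  have hπd : (R.map T).withDensity f = π := Measure.withDensity_rnDeriv_eq _ _ hac
  have hbind : π.bind K = R.withDensity (f ∘ T) := by
    conv_lhs => rw [← hπd]
    exact bind_withDensity hT hK hKp hfib hRdis hfm
  haveI hPprob : IsProbabilityMeasure (π.bind K) := isProbabilityMeasure_bind hK hKp π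
  have hPR : (π.bind K) ≪ R := by
    rw [hbind]; exact withDensity_absolutelyContinuous R _
  have hmapP : (π.bind K).map T = π := bind_map_eq hT hK hKp hfib π
  have hrn : (π.bind K).rnDeriv R =ᵐ[R] f ∘ T := by
    rw [hbind]; exact Measure.rnDeriv_withDensity R (hfm.comp hT)
  have hllr : llr (π.bind K) R =ᵐ[π.bind K] fun ω => llr π (R.map T) (T ω) := by
    filter_upwards [hPR.ae_le hrn] with ω hω
    simp only [llr, hω, Function.comp, hfdef]
  have hint2 : Integrable (fun ω => llr π (R.map T) (T ω)) (π.bind K) :=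
    integrable_comp_of_map hT hmapP (stronglyMeasurable_llr _ _) hint
  have hintP : Integrable (llr (π.bind K) R) (π.bind K) := hint2.congr hllr.symm
  rw [relEnt, relEnt, if_pos ⟨hPR, hintP⟩, if_pos ⟨hac, hint⟩]
  have heq : ∫ ω, llr (π.bind K) R ω ∂(π.bind K) = ∫ y, llr π (R.map T) y ∂π := by
    rw [integral_congr_ae hllr]
    exact integral_comp_of_map hT hmapP (stronglyMeasurable_llr _ _)
  exact_mod_cast le_of_eq (by rw [heq])

/-- Data-processing inequality for the endpoint map (using the bridge kernel). -/
lemma relEnt_map_le (hT : Measurable T) (hK : Measurable K)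
    (hKp : ∀ y, IsProbabilityMeasure (K y)) (hfib : ∀ y, K y {ω | T ω ≠ y} = 0)
    (hRdis : R = (R.map T).bind K) [IsProbabilityMeasure R]
    (P : Measure Ω) [IsProbabilityMeasure P] :
    relEnt (P.map T) (R.map T) ≤ relEnt P R := by
  by_cases hc : P ≪ R ∧ Integrable (llr P R) P
  swap
  · conv_rhs => rw [relEnt, if_neg hc]
    exact le_top
  obtain ⟨hPR, hintP⟩ := hc
  haveI : IsProbabilityMeasure (P.map T) := Measure.isProbabilityMeasure_map hT.aemeasurable
  haveI : IsProbabilityMeasure (R.map T) := Measure.isProbabilityMeasure_map hT.aemeasurable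
  have hacT : P.map T ≪ R.map T := hPR.map hT
  set h : 𝒴 → ENNReal := (P.map T).rnDeriv (R.map T) with hh
  have hhm : Measurable h := Measure.measurable_rnDeriv _ _
  have hPTd : (R.map T).withDensity h = P.map T := Measure.withDensity_rnDeriv_eq _ _ hacT
  set Q : Measure Ω := (P.map T).bind K with hQdef
  haveI hQprob : IsProbabilityMeasure Q := isProbabilityMeasure_bind hK hKp _
  have hQ : Q = R.withDensity (h ∘ T) := by
    rw [hQdef, ← hPTd]
    exact bind_withDensity hT hK hKp hfib hRdis hhm
  set g : Ω → ENNReal := h ∘ T with hg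
  have hgm : Measurable g := hhm.comp hT
  have hgms : MeasurableSet {ω | g ω = 0} := hgm (measurableSet_singleton 0)
  have hPN : P {ω | g ω = 0} = 0 := by
    have hms0 : MeasurableSet {y | h y = 0} := hhm (measurableSet_singleton 0)
    have h0 : (P.map T) {y | h y = 0} = 0 := by
      rw [← hPTd, withDensity_apply _ hms0]
      rw [setLIntegral_congr_fun hms0 (fun y hy => hy)]
      simp
    have hset : {ω | g ω = 0} = T ⁻¹' {y | h y = 0} := rfl
    rw [hset, ← Measure.map_apply hT hms0]
    exact h0
  have hPQ : P ≪ Q := by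
    refine Measure.AbsolutelyContinuous.mk fun A hA hQA => ?_
    rw [hQ, withDensity_apply _ hA] at hQA
    have h1 : R ({ω | g ω ≠ 0} ∩ A) = 0 := by
      have hae0 := (setLIntegral_eq_zero_iff hA hgm).mp hQA
      refine measure_mono_null ?_ (ae_iff.mp hae0)
      exact fun ω hω himp => hω.1 (himp hω.2)
    have h2 : P ({ω | g ω ≠ 0} ∩ A) = 0 := hPR h1
    have hsub : A ⊆ ({ω | g ω ≠ 0} ∩ A) ∪ {ω | g ω = 0} := by
      intro ω hω
      by_cases h0 : g ω = 0
      · exact Or.inr h0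
      · exact Or.inl ⟨h0, hω⟩
    refine le_antisymm ?_ zero_le
    calc P A ≤ P (({ω | g ω ≠ 0} ∩ A) ∪ {ω | g ω = 0}) := measure_mono hsub
      _ ≤ P ({ω | g ω ≠ 0} ∩ A) + P {ω | g ω = 0} := measure_union_le _ _
      _ = 0 := by rw [h2, hPN, add_zero]
  set p : Ω → ENNReal := P.rnDeriv R with hp
  have hpm : Measurable p := Measure.measurable_rnDeriv _ _
  have hp_eq : R.withDensity p = P := Measure.withDensity_rnDeriv_eq _ _ hPR
  have hPz : ∀ᵐ ω ∂ R, ω ∈ {ω | g ω = 0} → p ω = 0 := by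
    have hz : ∫⁻ ω in {ω | g ω = 0}, p ω ∂ R = 0 := by
      rw [← withDensity_apply _ hgms, hp_eq]
      exact hPN
    exact (setLIntegral_eq_zero_iff hgms hpm).mp hz
  have hgtop : ∀ᵐ ω ∂ R, g ω ≠ ⊤ := by
    have hhy : ∀ᵐ y ∂(R.map T), h y ≠ ⊤ := Measure.rnDeriv_ne_top _ _
    exact (MeasureTheory.ae_map_iff hT.aemeasurable
      (hhm (measurableSet_singleton ⊤)).compl).mp hhy
  have hPd : Q.withDensity (fun ω => (g ω)⁻¹ * p ω) = P := by
    rw [hQ, ← hp_eq]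
    ext A hA
    rw [withDensity_apply _ hA, withDensity_apply _ hA,
      setLIntegral_withDensity_eq_setLIntegral_mul R hgm
        (show Measurable (fun ω => (g ω)⁻¹ * p ω) from hgm.inv.mul hpm) hA]
    refine lintegral_congr_ae (ae_restrict_of_ae ?_)
    filter_upwards [hPz, hgtop] with ω hz htop
    by_cases h0 : g ω = 0
    · simp [Pi.mul_apply, h0, hz h0]
    · simp only [Pi.mul_apply]
      rw [← mul_assoc, ENNReal.mul_inv_cancel h0 htop, one_mul]
  have hrnPQ : P.rnDeriv Q =ᵐ[Q] fun ω => (g ω)⁻¹ * p ω := by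
    refine (Measure.eq_rnDeriv (μ := P) (ν := Q)
      (show Measurable (fun ω => (g ω)⁻¹ * p ω) from hgm.inv.mul hpm)
      Measure.MutuallySingular.zero_left ?_).symm
    rw [zero_add, hPd]
  have hae1 : ∀ᵐ ω ∂P, 0 < p ω := Measure.rnDeriv_pos hPR
  have hae2 : ∀ᵐ ω ∂P, p ω ≠ ⊤ := hPR.ae_le (Measure.rnDeriv_ne_top P R)
  have hae3 : ∀ᵐ ω ∂P, g ω ≠ 0 := by
    rw [ae_iff]
    simpa using hPN
  have hae4 : ∀ᵐ ω ∂P, g ω ≠ ⊤ := hPR.ae_le hgtop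
  have key : llr P Q =ᵐ[P] fun ω => llr P R ω - llr (P.map T) (R.map T) (T ω) := by
    filter_upwards [hPQ.ae_le hrnPQ, hae1, hae2, hae3, hae4] with ω h1 h2 h3 h4 h5
    have hgR : (g ω).toReal ≠ 0 := ENNReal.toReal_ne_zero.mpr ⟨h4, h5⟩
    have hpR : (p ω).toReal ≠ 0 := ENNReal.toReal_ne_zero.mpr ⟨h2.ne', h3⟩
    simp only [llr]
    rw [h1, ENNReal.toReal_mul, ENNReal.toReal_inv,
      Real.log_mul (inv_ne_zero hgR) hpR, Real.log_inv]
    have hfold : ((Measure.map T P).rnDeriv (Measure.map T R)) (T ω) = g ω := rfl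
    rw [hfold]
    ring
  have hnegQ : Integrable (fun ω => max (- llr P Q ω) 0) P := integrable_negPart_llr P Q hPQ
  have hnegT' : Integrable (fun y => max (- llr (P.map T) (R.map T) y) 0) (P.map T) :=
    integrable_negPart_llr _ _ hacT
  have hnegT : Integrable (fun ω => max (- llr (P.map T) (R.map T) (T ω)) 0) P :=
    (integrable_map_measure
      ((measurable_llr _ _).neg.max measurable_const).aestronglyMeasurable
      hT.aemeasurable).mp hnegT'
  have hposT : Integrable (fun ω => max (llr (P.map T) (R.map T) (T ω)) 0) P := by
    refine (hintP.pos_part.add hnegQ).mono'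
      (((measurable_llr _ _).comp hT).max measurable_const).aestronglyMeasurable ?_
    filter_upwards [key] with ω hω
    rw [Real.norm_eq_abs, abs_of_nonneg (le_max_right _ _)]
    have : llr (P.map T) (R.map T) (T ω) = llr P R ω - llr P Q ω := by
      rw [hω]; ring
    rw [this]
    have hb1 : llr P R ω - llr P Q ω ≤ max (llr P R ω) 0 + max (- llr P Q ω) 0 := by
      have := le_max_left (llr P R ω) 0
      have := le_max_left (- llr P Q ω) 0
      linarith
    have hb2 : (0:ℝ) ≤ max (llr P R ω) 0 + max (- llr P Q ω) 0 := by
      have := le_max_right (llr P R ω) 0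
      have := le_max_right (- llr P Q ω) 0
      linarith
    exact max_le hb1 hb2
  have hφint : Integrable (fun ω => llr (P.map T) (R.map T) (T ω)) P := by
    have hid : (fun ω => llr (P.map T) (R.map T) (T ω))
        = fun ω => max (llr (P.map T) (R.map T) (T ω)) 0
          - max (- llr (P.map T) (R.map T) (T ω)) 0 := by
      funext ω
      exact (max_zero_sub_max_neg_zero_eq_self _).symm
    rw [hid]
    exact hposT.sub hnegT
  have hQint : Integrable (llr P Q) P := (hintP.sub hφint).congr key.symm
  have hGibbs : (0:ℝ) ≤ ∫ ω, llr P Q ω ∂P := gibbs_llr_nonneg P Q hPQ hQint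
  have hsum : ∫ ω, llr P Q ω ∂P
      = ∫ ω, llr P R ω ∂P - ∫ ω, llr (P.map T) (R.map T) (T ω) ∂P := by
    rw [integral_congr_ae key, integral_sub hintP hφint]
  have hIT : Integrable (llr (P.map T) (R.map T)) (P.map T) :=
    (integrable_map_measure (stronglyMeasurable_llr _ _).aestronglyMeasurable
      hT.aemeasurable).mpr hφint
  rw [relEnt, relEnt, if_pos ⟨hacT, hIT⟩, if_pos ⟨hPR, hintP⟩]
  have hfin : ∫ y, llr (P.map T) (R.map T) y ∂(P.map T) ≤ ∫ ω, llr P R ω ∂P := by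
    rw [integral_map hT.aemeasurable (stronglyMeasurable_llr _ _).aestronglyMeasurable]
    linarith [hsum, hGibbs]
  exact_mod_cast hfin

end Aux

/-- equivalence of the dynamic and static Schrödinger bridge
problems. If `Pstar` minimizes `H(P | R)` subject to `P₀ = ρ₀`, `P₁ = ρ₁`, then
its endpoint joint law minimizes `H(π | R₀₁)` over couplings of `(ρ₀, ρ₁)`.
Conversely, if `pistar` minimizes the static problem, the mixture
`Pstar = ∫ R^{xy} dpistar` minimizes the dynamic problem and has `Pstar₀₁ = pistar`. -/
theorem schroedinger_static_dynamic_equivalence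
    {Ω 𝒳 : Type*} [MeasurableSpace Ω] [StandardBorelSpace Ω]
    [MeasurableSpace 𝒳] [StandardBorelSpace 𝒳]
    (X₀ X₁ : Ω → 𝒳) (hX₀ : Measurable X₀) (hX₁ : Measurable X₁)
    (R : Measure Ω) [IsProbabilityMeasure R]
    (ρ₀ ρ₁ : Measure 𝒳) [IsProbabilityMeasure ρ₀] [IsProbabilityMeasure ρ₁]
    -- bridges `R^{xy}` : a disintegration of `R` over the endpoint pair
    (Rxy : 𝒳 × 𝒳 → Measure Ω) (hRm : Measurable Rxy)
    (hRprob : ∀ xy, IsProbabilityMeasure (Rxy xy))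
    (hRfib : ∀ xy, Rxy xy {ω | (X₀ ω, X₁ ω) ≠ xy} = 0)
    (hRdis : R = (R.map (fun ω => (X₀ ω, X₁ ω))).bind Rxy) :
    -- dynamic minimizer ⟹ static minimizer
    ((∀ Pstar : Measure Ω, IsProbabilityMeasure Pstar →
        Pstar.map X₀ = ρ₀ → Pstar.map X₁ = ρ₁ →
        (∀ P : Measure Ω, IsProbabilityMeasure P →
          P.map X₀ = ρ₀ → P.map X₁ = ρ₁ →
          relEnt Pstar R ≤ relEnt P R) →
        ((Pstar.map (fun ω => (X₀ ω, X₁ ω))).fst = ρ₀ ∧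
         (Pstar.map (fun ω => (X₀ ω, X₁ ω))).snd = ρ₁ ∧
         (∀ π : Measure (𝒳 × 𝒳), IsProbabilityMeasure π →
            π.fst = ρ₀ → π.snd = ρ₁ →
            relEnt (Pstar.map (fun ω => (X₀ ω, X₁ ω)))
                (R.map (fun ω => (X₀ ω, X₁ ω)))
              ≤ relEnt π (R.map (fun ω => (X₀ ω, X₁ ω)))))) ∧
    -- static minimizer ⟹ dynamic minimizer via `Pstar = pistar.bind Rxy`
    (∀ pistar : Measure (𝒳 × 𝒳), IsProbabilityMeasure pistar →
        pistar.fst = ρ₀ → pistar.snd = ρ₁ →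
        (∀ π : Measure (𝒳 × 𝒳), IsProbabilityMeasure π →
          π.fst = ρ₀ → π.snd = ρ₁ →
          relEnt pistar (R.map (fun ω => (X₀ ω, X₁ ω)))
            ≤ relEnt π (R.map (fun ω => (X₀ ω, X₁ ω)))) →
        (IsProbabilityMeasure (pistar.bind Rxy) ∧
         (pistar.bind Rxy).map X₀ = ρ₀ ∧ (pistar.bind Rxy).map X₁ = ρ₁ ∧
         (∀ P : Measure Ω, IsProbabilityMeasure P →
            P.map X₀ = ρ₀ → P.map X₁ = ρ₁ →
            relEnt (pistar.bind Rxy) R ≤ relEnt P R) ∧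
         (pistar.bind Rxy).map (fun ω => (X₀ ω, X₁ ω)) = pistar))) := by
  have hT : Measurable (fun ω => (X₀ ω, X₁ ω)) := hX₀.prodMk hX₁
  have hfst : ∀ (μ : Measure Ω), (μ.map (fun ω => (X₀ ω, X₁ ω))).fst = μ.map X₀ :=
    fun μ => Measure.fst_map_prodMk hX₁
  have hsnd : ∀ (μ : Measure Ω), (μ.map (fun ω => (X₀ ω, X₁ ω))).snd = μ.map X₁ :=
    fun μ => Measure.snd_map_prodMk hX₀
  constructor
  · intro Pstar hPs h0 h1 hmin
    refine ⟨by rw [hfst, h0], by rw [hsnd, h1], ?_⟩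
    intro π hπ hπ0 hπ1
    haveI hPp : IsProbabilityMeasure (π.bind Rxy) := isProbabilityMeasure_bind hRm hRprob π
    have hPmap : (π.bind Rxy).map (fun ω => (X₀ ω, X₁ ω)) = π :=
      bind_map_eq hT hRm hRprob hRfib π
    have hP0 : (π.bind Rxy).map X₀ = ρ₀ := by rw [← hfst, hPmap, hπ0]
    have hP1 : (π.bind Rxy).map X₁ = ρ₁ := by rw [← hsnd, hPmap, hπ1]
    calc relEnt (Pstar.map (fun ω => (X₀ ω, X₁ ω))) (R.map (fun ω => (X₀ ω, X₁ ω)))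
        ≤ relEnt Pstar R := relEnt_map_le hT hRm hRprob hRfib hRdis Pstar
      _ ≤ relEnt (π.bind Rxy) R := hmin _ hPp hP0 hP1
      _ ≤ relEnt π (R.map (fun ω => (X₀ ω, X₁ ω))) :=
          relEnt_bind_le hT hRm hRprob hRfib hRdis π
  · intro pistar hps hp0 hp1 hmin
    haveI hPp : IsProbabilityMeasure (pistar.bind Rxy) :=
      isProbabilityMeasure_bind hRm hRprob pistar
    have hPmap : (pistar.bind Rxy).map (fun ω => (X₀ ω, X₁ ω)) = pistar :=
      bind_map_eq hT hRm hRprob hRfib pistar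
    have hP0 : (pistar.bind Rxy).map X₀ = ρ₀ := by rw [← hfst, hPmap, hp0]
    have hP1 : (pistar.bind Rxy).map X₁ = ρ₁ := by rw [← hsnd, hPmap, hp1]
    refine ⟨hPp, hP0, hP1, ?_, hPmap⟩
    intro P hP hPm0 hPm1
    haveI : IsProbabilityMeasure (P.map (fun ω => (X₀ ω, X₁ ω))) :=
      Measure.isProbabilityMeasure_map hT.aemeasurable
    calc relEnt (pistar.bind Rxy) R
        ≤ relEnt pistar (R.map (fun ω => (X₀ ω, X₁ ω))) :=
          relEnt_bind_le hT hRm hRprob hRfib hRdis pistar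
      _ ≤ relEnt (P.map (fun ω => (X₀ ω, X₁ ω))) (R.map (fun ω => (X₀ ω, X₁ ω))) :=
          hmin _ inferInstance (by rw [hfst, hPm0]) (by rw [hsnd, hPm1])
      _ ≤ relEnt P R := relEnt_map_le hT hRm hRprob hRfib hRdis P
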